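/- arXiv:1803.02054 — 3 statements merged into one kernel-verified Lean document; each statement's English description precedes it below -/
import Mathlib

section
/- Let x = (x_0, x_1, x_2, …) be an admissible sequence of positive integers, and let n ≥ 1. If the shifted sequence σ^k x is not admissible for every 1 ≤ k ≤ n−1, while σ^n x is admissible, then x_n ≥ n. -/
open Finset

/-- A finite string `(i₀, …, i_{k-1})` of positive integers is *admissible* if
`i_l ≤ i₀ + i₁ + ⋯ + i_{l-1}` for every `1 ≤ l ≤ k - 1`. -/
def StrAdmissible (l : List ℕ+) : Prop :=
  ∀ (k : ℕ) (h : k + 1 < l.length),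
    ((l.get ⟨k + 1, h⟩ : ℕ+) : ℕ) ≤ ((l.take (k + 1)).map fun i => (i : ℕ)).sum

/-- An infinite sequence `(x₀, x₁, …)` of positive integers is *admissible* if every
initial string is admissible, i.e. `x_{l+1} ≤ x₀ + ⋯ + x_l` for all `l`. -/
def SeqAdmissible (x : ℕ → ℕ+) : Prop :=
  ∀ k : ℕ, ((x (k + 1) : ℕ+) : ℕ) ≤ ∑ j ∈ Finset.range (k + 1), ((x j : ℕ+) : ℕ)

/-- If `x` is an admissible sequence of positive integers, `n ≥ 1`,
the shifted sequence `σᵏ x` is not admissible for every `1 ≤ k ≤ n - 1`, while `σⁿ x`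
is admissible, then `xₙ ≥ n`. -/
theorem entry_ge_of_first_admissible_shift (x : ℕ → ℕ+) (hx : SeqAdmissible x)
    (n : ℕ) (hn : 1 ≤ n)
    (hnot : ∀ k, 1 ≤ k → k ≤ n - 1 → ¬ SeqAdmissible fun j => x (j + k))
    (hyes : SeqAdmissible fun j => x (j + n)) :
    n ≤ ((x n : ℕ+) : ℕ) := by
  rcases eq_or_lt_of_le hn with h1 | h1
  · have := (x n).pos
    omega
  -- key : every shift k with 1 ≤ k < n has a "bad index" m with k < m ≤ n
  have key : ∀ k, 1 ≤ k → k < n → ∃ m, k < m ∧ m ≤ n ∧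
      (∑ j ∈ Finset.Ico k m, ((x j : ℕ+) : ℕ)) < ((x m : ℕ+) : ℕ) := by
    intro k hk1 hkn
    have hbad := hnot k hk1 (by omega)
    rw [SeqAdmissible] at hbad
    push_neg at hbad
    obtain ⟨l, hl⟩ := hbad

    have hsum : ∑ j ∈ Finset.range (l + 1), ((x (j + k) : ℕ+) : ℕ)
        = ∑ j ∈ Finset.Ico k (k + l + 1), ((x j : ℕ+) : ℕ) := by
      rw [Finset.sum_Ico_eq_sum_range]
      have : k + l + 1 - k = l + 1 := by omega
      rw [this]
      exact Finset.sum_congr rfl fun j _ => by rw [Nat.add_comm k j]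
    rw [hsum] at hl
    set m := k + l + 1 with hm
    have hmm : l + 1 + k = m := by omega
    rw [hmm] at hl
    have hle : m ≤ n := by
      by_contra hgt
      push_neg at hgt
      have hadm : ((x (m - n - 1 + 1 + n) : ℕ+) : ℕ)
          ≤ ∑ j ∈ Finset.range (m - n - 1 + 1), ((x (j + n) : ℕ+) : ℕ) := hyes (m - n - 1)

      have h1' : m - n - 1 + 1 + n = m := by omega
      rw [h1'] at hadm
      have hsum2 : ∑ j ∈ Finset.range (m - n - 1 + 1), ((x (j + n) : ℕ+) : ℕ)
          = ∑ j ∈ Finset.Ico n m, ((x j : ℕ+) : ℕ) := by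
        rw [Finset.sum_Ico_eq_sum_range]
        have : m - n = m - n - 1 + 1 := by omega
        rw [this]
        exact Finset.sum_congr rfl fun j _ => by rw [Nat.add_comm n j]
      rw [hsum2] at hadm
      have hsub : ∑ j ∈ Finset.Ico n m, ((x j : ℕ+) : ℕ)
          ≤ ∑ j ∈ Finset.Ico k m, ((x j : ℕ+) : ℕ) :=
        Finset.sum_le_sum_of_subset (Finset.Ico_subset_Ico (by omega) le_rfl)
      omega
    exact ⟨m, by omega, hle, hl⟩
  -- main claim by strong induction on n - k
  have claim : ∀ d k, n - k = d → 1 ≤ k → k < n →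
      n - k + ((x k : ℕ+) : ℕ) ≤ ((x n : ℕ+) : ℕ) := by
    intro d
    induction d using Nat.strong_induction_on with
    | _ d ih =>
      intro k hd hk1 hkn
      obtain ⟨m, hkm, hmn, hsum⟩ := key k hk1 hkn
      have hsplit : ∑ j ∈ Finset.Ico k m, ((x j : ℕ+) : ℕ)
          = ((x k : ℕ+) : ℕ) + ∑ j ∈ Finset.Ico (k + 1) m, ((x j : ℕ+) : ℕ) :=
        Finset.sum_eq_sum_Ico_succ_bot hkm _
      have hcard : (m - (k + 1)) ≤ ∑ j ∈ Finset.Ico (k + 1) m, ((x j : ℕ+) : ℕ) := by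
        calc m - (k + 1) = ∑ _j ∈ Finset.Ico (k + 1) m, 1 := by
              rw [Finset.sum_const, Nat.card_Ico, smul_eq_mul, mul_one]
          _ ≤ _ := Finset.sum_le_sum fun j _ => (x j).pos
      have hxm : ((x k : ℕ+) : ℕ) + (m - k) ≤ ((x m : ℕ+) : ℕ) := by omega
      rcases eq_or_lt_of_le hmn with heq | hlt
      · subst heq; omega
      · have := ih (n - m) (by omega) m rfl (by omega) hlt
        omega
  have := claim (n - 1) 1 rfl le_rfl h1
  have := (x 1).pos
  omega
end

section
/- Let (i_0, i_1, …, i_{n-1}) be an admissible string of positive integers with n ≥ 2, and suppose that for every 1 ≤ k ≤ n−2 the suffix (i_k, …, i_{n-1}) is not admissible. Then i_{n-1} ≥ n − 1; in particular, when i_0 = 1 the length satisfies n ≤ i_{n-1} − i_0 + 2. -/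
open Finset

private lemma norm_sum (M : List ℕ+) :
    ((M.map fun i => (i : ℕ)).sum) = (M.map (fun i : ℕ+ => (i : ℕ))).sum := by
  induction M with
  | nil => rfl
  | cons a M ih => simpa using ih

private lemma sum_take_eq (L : List ℕ+) (t : ℕ) (ht : t ≤ L.length) :
    ((L.take t).map fun i => (i : ℕ)).sum = ∑ j ∈ Finset.range t, ((L.getD j 1 : ℕ+) : ℕ) := by
  rw [norm_sum]
  induction t with
  | zero => simp
  | succ t ih =>
    have h : t < L.length := by omega
    rw [Finset.sum_range_succ, ← ih (by omega), List.take_succ, List.map_append,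
      List.sum_append, List.getElem?_eq_getElem h, List.getD_eq_getElem _ _ h]
    simp

private lemma get_eq_getD (L : List ℕ+) (j : ℕ) (h : j < L.length) :
    (L.get ⟨j, h⟩ : ℕ+) = L.getD j 1 := by
  rw [List.getD_eq_getElem _ _ h]; rfl

private lemma getD_drop' (L : List ℕ+) (k j : ℕ) (h : k + j < L.length) :
    (L.drop k).getD j 1 = L.getD (k + j) 1 := by
  rw [List.getD_eq_getElem _ _ (by simp; omega), List.getD_eq_getElem _ _ h, List.getElem_drop]

/-- Let `(i₀, …, i_{n-1})` be an admissible string of positive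
integers with `n ≥ 2` such that for every `1 ≤ k ≤ n - 2` the suffix `(i_k, …, i_{n-1})`
is not admissible. Then `i_{n-1} ≥ n - 1`; in particular when `i₀ = 1` the length
satisfies `n ≤ i_{n-1} - i₀ + 2`. -/
theorem length_bound_of_markov_partition_labels (l : List ℕ+) (hne : l ≠ [])
    (hlen : 2 ≤ l.length) (hadm : StrAdmissible l)
    (hsuf : ∀ k, 1 ≤ k → k ≤ l.length - 2 → ¬ StrAdmissible (l.drop k)) :
    l.length - 1 ≤ ((l.getLast hne : ℕ+) : ℕ) ∧
      ((l.head hne : ℕ+) = 1 →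
        l.length ≤ ((l.getLast hne : ℕ+) : ℕ) - ((l.head hne : ℕ+) : ℕ) + 2) := by
  set n := l.length with hn
  set f : ℕ → ℕ := fun j => ((l.getD j 1 : ℕ+) : ℕ) with hf
  have fpos : ∀ j, 1 ≤ f j := fun j => (l.getD j 1).one_le
  have key : ∀ d k, 1 ≤ k → k ≤ n - 2 → n - 1 - k ≤ d → (n - 1 - k) + f k ≤ f (n - 1) := by
    intro d
    induction d with
    | zero => intro k hk1 hk2 hd; omega
    | succ d ih =>
      intro k hk1 hk2 hd
      have hns := hsuf k hk1 hk2
      rw [StrAdmissible] at hns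
      push_neg at hns
      obtain ⟨m, hm, hgt⟩ := hns
      rw [List.length_drop] at hm
      have hkm : k + (m + 1) < n := by omega
      rw [get_eq_getD, getD_drop' l k (m+1) hkm,
        sum_take_eq _ _ (by rw [List.length_drop]; omega)] at hgt
      have hsum : ∑ j ∈ Finset.range (m + 1), (((l.drop k).getD j 1 : ℕ+) : ℕ)
          = ∑ j ∈ Finset.range (m + 1), f (k + j) := by
        refine Finset.sum_congr rfl fun j hj => ?_
        rw [Finset.mem_range] at hj
        rw [getD_drop' l k j (by omega)]
      rw [hsum] at hgt
      have hfe : ((l.getD (k + (m + 1)) 1 : ℕ+) : ℕ) = f (k + m + 1) := by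
        rw [hf, show k + (m + 1) = k + m + 1 from by ring]
      rw [hfe] at hgt
      have hlow : m + f k ≤ ∑ j ∈ Finset.range (m + 1), f (k + j) := by
        rw [Finset.sum_range_succ']
        have : m ≤ ∑ j ∈ Finset.range m, f (k + (j + 1)) := by
          calc m = ∑ _j ∈ Finset.range m, 1 := by simp
          _ ≤ _ := Finset.sum_le_sum fun j _ => fpos _
        simpa [add_comm] using Nat.add_le_add this (le_refl (f k))
      have hstep : m + 1 + f k ≤ f (k + m + 1) := by
        have := lt_of_le_of_lt hlow hgt
        omega
      rcases eq_or_lt_of_le (show k + m + 1 ≤ n - 1 by omega) with heq | hlt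
      · have hEq : f (k + m + 1) = f (n - 1) := congrArg f heq
        omega
      · have hm' := ih (k + m + 1) (by omega) (by omega) (by omega)
        omega
  constructor
  · have hlast : ((l.getLast hne : ℕ+) : ℕ) = f (n - 1) := by
      rw [hf]
      simp only
      rw [List.getLast_eq_getElem, List.getD_eq_getElem _ _ (by omega)]
    rw [hlast]
    rcases eq_or_lt_of_le hlen with h2 | h3
    · have := fpos (n - 1); omega
    · have := key n 1 le_rfl (by omega) (by omega)
      have := fpos 1
      omega
  · intro hhead
    have hlast : ((l.getLast hne : ℕ+) : ℕ) = f (n - 1) := by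
      rw [hf]
      simp only
      rw [List.getLast_eq_getElem, List.getD_eq_getElem _ _ (by omega)]
    have hbound : n - 1 ≤ f (n - 1) := by
      rcases eq_or_lt_of_le hlen with h2 | h3
      · have := fpos (n - 1); omega
      · have := key n 1 le_rfl (by omega) (by omega)
        have := fpos 1
        omega
    have h1 : ((l.head hne : ℕ+) : ℕ) = 1 := by rw [hhead]; rfl
    rw [hlast, h1]
    omega
end

section
/- (Combinatorial mixing of admissible strings) For any two admissible strings u = (u_0, …, u_{p-1}) and v = (v_0, …, v_{q-1}) of positive integers, there exists N such that for every n ≥ N there is a string w of positive integers of length n for which the concatenation u⌢w⌢v is admissible. -/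
open Finset

lemma coe_sum_eq (l : List ℕ+) :
    ((l.map fun i => (i : ℕ)).sum : ℕ) = (l.map PNat.val).sum := by
  induction l with
  | nil => rfl
  | cons a t ih =>
    show (List.map _ (a :: t >>= _)).sum = _
    simpa [List.flatMap_cons] using ih

lemma len_le_sum (l : List ℕ+) : l.length ≤ (l.map PNat.val).sum := by
  induction l with
  | nil => simp
  | cons a t ih => simp only [List.length_cons, List.map_cons, List.sum_cons]
                   have : 0 < a.val := a.2; omega

lemma mem_le_sum (l : List ℕ+) (j : ℕ) (hj : j < l.length) :
    ((l[j] : ℕ+) : ℕ) ≤ (l.map PNat.val).sum := by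
  apply List.le_sum_of_mem
  exact List.mem_map.2 ⟨l[j], List.getElem_mem hj, rfl⟩


/-- **Combinatorial mixing of admissible strings.** For any two
admissible strings `u` and `v` of positive integers there is `N` such that for every
`n ≥ N` there is a string `w` of length `n` for which the concatenation `u ++ w ++ v`
is admissible. -/
theorem combinatorial_mixing_of_admissible_strings (u v : List ℕ+)
    (hu : StrAdmissible u) (hv : StrAdmissible v) :
    ∃ N : ℕ, ∀ n : ℕ, N ≤ n → ∃ w : List ℕ+,
      w.length = n ∧ StrAdmissible (u ++ w ++ v) := by
  refine ⟨(v.map fun i => (i : ℕ)).sum, fun n hn => ⟨List.replicate n 1,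
    List.length_replicate, ?_⟩⟩
  rw [coe_sum_eq] at hn
  intro k h
  rw [List.get_eq_getElem, coe_sum_eq]
  simp only [Fin.val_mk]
  have hL : (u ++ List.replicate n 1 ++ v).length = u.length + n + v.length := by
    simp [Nat.add_assoc]
  have htake : ((u ++ List.replicate n 1 ++ v).take (k + 1)).map PNat.val =
      (u.take (k + 1)).map PNat.val ++
        (((List.replicate n 1).take (k + 1 - u.length)).map PNat.val ++
          (v.take (k + 1 - u.length - n)).map PNat.val) := by
    rw [List.append_assoc, List.take_append,
      List.take_append, List.length_replicate]
    simp
  rw [htake, List.sum_append, List.sum_append]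
  rcases lt_or_ge (k + 1) u.length with hk | hk
  · -- in u
    have hlt : k + 1 < (u ++ List.replicate n 1).length := by
      simp only [List.length_append, List.length_replicate]; omega
    rw [List.getElem_append_left hlt, List.getElem_append_left hk]
    have h7 := hu k hk
    rw [coe_sum_eq] at h7
    simp only [List.get_eq_getElem, Fin.val_mk] at h7
    omega
  · rcases lt_or_ge (k + 1) (u.length + n) with hk2 | hk2
    · -- in replicate: element is 1
      have h1 : ((u ++ List.replicate n 1 ++ v)[k + 1] : ℕ+) = 1 := by
        have hlt : k + 1 < (u ++ List.replicate n 1).length := by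
          simp only [List.length_append, List.length_replicate]; omega
        rw [List.getElem_append_left hlt, List.getElem_append_right hk]
        simp
      rw [h1]
      have h2 := len_le_sum (u.take (k + 1))
      have h3 := len_le_sum ((List.replicate n 1).take (k + 1 - u.length))
      rw [List.length_take] at h2
      rw [List.length_take, List.length_replicate] at h3
      simp only [PNat.one_coe]
      omega
    · -- in v
      have hkv : k + 1 - (u.length + n) < v.length := by
        rw [hL] at h; omega
      have h1 : ((u ++ List.replicate n 1 ++ v)[k + 1] : ℕ+) =
          v[k + 1 - (u.length + n)] := by
        have hle : (u ++ List.replicate n 1).length ≤ k + 1 := by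
          simp only [List.length_append, List.length_replicate]; omega
        rw [List.getElem_append_right hle]
        congr 1
        simp
      rw [h1]
      have h4 : ((List.replicate n 1).take (k + 1 - u.length)) =
          List.replicate n (1 : ℕ+) := by
        apply List.take_of_length_le
        simp only [List.length_replicate]; omega
      rw [h4]
      have h5 : ((List.replicate n (1 : ℕ+)).map PNat.val).sum = n := by
        simp [List.map_replicate]
      have h6 := mem_le_sum v _ hkv
      omega
end
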